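/- Properties of the rotational Killing tensors: let K be the symmetric tensor field on ℝ³ with components K¹¹ = a₁ − 2b₁₂z + c₂z² + c₃y², K¹² = −c₃xy, K¹³ = b₁₂x − c₂xz, K²² = a₁ − 2b₁₂z + c₃x² + c₂z², K²³ = b₁₂y − c₂yz, K³³ = a₃ + c₂(x² + y²), for arbitrary real parameters a₁, a₃, b₁₂, c₂, c₃. Then: (i) K is invariant under the rotational Killing vector V(x,y,z) = (y, −x, 0), i.e. Σ_k V^k ∂_k K^{ij} − Σ_k K^{kj} ∂_k V^i − Σ_k K^{ik} ∂_k V^j = 0 identically for all i, j; and (ii) for every t ∈ ℝ the translated tensor K̃(x,y,z) := K(x, y, z + t) is of the same form with parameters ã₁ = a₁ − 2b₁₂t + c₂t², ã₃ = a₃, b̃₁₂ = b₁₂ − c₂t, c̃₂ = c₂, c̃₃ = c₃, so the four fundamental I(ℝ)-invariants Δ₁ = c₂, Δ₂ = b₁₂² + c₂(a₃ − a₁), Δ₃ = a₃, Δ₄ = c₃ are unchanged: in particular b̃₁₂² + c̃₂(ã₃ − ã₁) = b₁₂² + c₂(a₃ − a₁). -/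

import Mathlib

open Matrix

/-- 3×3 real matrices. -/
abbrev M3 := Matrix (Fin 3) (Fin 3) ℝ

/-- Partial derivative `∂_k f` at `x`. -/
noncomputable def pder (k : Fin 3) (f : (Fin 3 → ℝ) → ℝ) (x : Fin 3 → ℝ) : ℝ :=
  fderiv ℝ f x (Pi.single k 1)

/-- The rotational Killing tensor with parameters `a₁ a₃ b₁₂ c₂ c₃`. -/
def Kr (a₁ a₃ b₁₂ c₂ c₃ : ℝ) (p : Fin 3 → ℝ) : M3 :=
  !![a₁ - 2 * b₁₂ * p 2 + c₂ * (p 2) ^ 2 + c₃ * (p 1) ^ 2,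
       -c₃ * p 0 * p 1, b₁₂ * p 0 - c₂ * p 0 * p 2;
     -c₃ * p 0 * p 1,
       a₁ - 2 * b₁₂ * p 2 + c₃ * (p 0) ^ 2 + c₂ * (p 2) ^ 2,
       b₁₂ * p 1 - c₂ * p 1 * p 2;
     b₁₂ * p 0 - c₂ * p 0 * p 2, b₁₂ * p 1 - c₂ * p 1 * p 2,
       a₃ + c₂ * ((p 0) ^ 2 + (p 1) ^ 2)]

/-- The rotational Killing vector `V(x,y,z) = (y, −x, 0)`. -/
def Vrot3 (p : Fin 3 → ℝ) : Fin 3 → ℝ := ![p 1, -p 0, 0]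

section helpers
variable (k : Fin 3) (x : Fin 3 → ℝ) {f g : (Fin 3 → ℝ) → ℝ}

lemma pder_coord (m : Fin 3) : pder k (fun y => y m) x = if m = k then 1 else 0 := by
  have h : fderiv ℝ (fun y : Fin 3 → ℝ => y m) x
      = (ContinuousLinearMap.proj m : (Fin 3 → ℝ) →L[ℝ] ℝ) :=
    (ContinuousLinearMap.proj m : (Fin 3 → ℝ) →L[ℝ] ℝ).fderiv
  simp [pder, h, Pi.single_apply]

lemma pder_const (c : ℝ) : pder k (fun _ => c) x = 0 := by simp [pder]

lemma pder_add (hf : DifferentiableAt ℝ f x) (hg : DifferentiableAt ℝ g x) :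
    pder k (fun y => f y + g y) x = pder k f x + pder k g x := by
  simp [pder, fderiv_fun_add hf hg]

lemma pder_sub (hf : DifferentiableAt ℝ f x) (hg : DifferentiableAt ℝ g x) :
    pder k (fun y => f y - g y) x = pder k f x - pder k g x := by
  simp [pder, fderiv_fun_sub hf hg]

lemma pder_mul (hf : DifferentiableAt ℝ f x) (hg : DifferentiableAt ℝ g x) :
    pder k (fun y => f y * g y) x = f x * pder k g x + g x * pder k f x := by
  simp [pder, fderiv_fun_mul hf hg]

lemma pder_neg : pder k (fun y => -f y) x = -pder k f x := by
  simp [pder]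

end helpers

/-- STATEMENT 11: (i) the rotational Killing tensor is invariant under the
rotational Killing vector `V = (y, −x, 0)` (vanishing Lie derivative), and
(ii) translating along the z-axis by `t` keeps the rotational form, with the four
fundamental `I(ℝ)`-invariants unchanged. -/
theorem rotational_Killing_tensor_properties (a₁ a₃ b₁₂ c₂ c₃ : ℝ) :
    (∀ (x : Fin 3 → ℝ) (i j : Fin 3),
      (∑ k : Fin 3, Vrot3 x k * pder k (fun y => Kr a₁ a₃ b₁₂ c₂ c₃ y i j) x)
        - (∑ k : Fin 3, Kr a₁ a₃ b₁₂ c₂ c₃ x k j * pder k (fun y => Vrot3 y i) x)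
        - (∑ k : Fin 3, Kr a₁ a₃ b₁₂ c₂ c₃ x i k * pder k (fun y => Vrot3 y j) x)
        = 0) ∧
    (∀ t : ℝ,
      (∀ x : Fin 3 → ℝ,
        Kr a₁ a₃ b₁₂ c₂ c₃ (x + Pi.single 2 t)
          = Kr (a₁ - 2 * b₁₂ * t + c₂ * t ^ 2) a₃ (b₁₂ - c₂ * t) c₂ c₃ x) ∧
      (b₁₂ - c₂ * t) ^ 2 + c₂ * (a₃ - (a₁ - 2 * b₁₂ * t + c₂ * t ^ 2))
        = b₁₂ ^ 2 + c₂ * (a₃ - a₁)) := by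
  constructor
  · intro x i j
    fin_cases i <;> fin_cases j <;>
      simp only [Kr, Vrot3, Fin.sum_univ_three, Fin.isValue, Fin.mk_zero, Fin.mk_one,
        show (⟨2, by norm_num⟩ : Fin 3) = 2 from rfl, Matrix.of_apply, Matrix.cons_val',
        Matrix.cons_val_zero, Matrix.cons_val_one, Matrix.head_cons, Matrix.empty_val',
        Matrix.cons_val_fin_one, Matrix.head_fin_const, Matrix.cons_val_two, Matrix.tail_cons,
        pow_two, neg_mul] <;>
      (simp (disch := fun_prop) only [pder_add, pder_sub, pder_mul, pder_neg, pder_coord,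
        pder_const]) <;>
      norm_num [Fin.ext_iff] <;> ring
  · intro t
    constructor
    · intro x
      have h0 : (x + (Pi.single 2 t : Fin 3 → ℝ)) 0 = x 0 := by simp
      have h1 : (x + (Pi.single 2 t : Fin 3 → ℝ)) 1 = x 1 := by simp
      have h2 : (x + (Pi.single 2 t : Fin 3 → ℝ)) 2 = x 2 + t := by simp
      funext i j
      fin_cases i <;> fin_cases j <;>
        simp [Kr, h0, h1, h2] <;> ring
    · ring
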